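/- Let G be a connected graph on [n] that has the interval property with respect to its labeling, let H = in_lex(G), and let ℓ be the length of the longest induced path of G. Then indmatch(H) = ℓ. -/

import Mathlib

open SimpleGraph

/-- `G` has the interval property with respect to its labeling: for every edge `{i,j}`
with `i < j`, every pair `{k,l}` with `i ≤ k < l ≤ j` is an edge of `G`. -/
def HasIntervalProperty {n : ℕ} (G : SimpleGraph (Fin n)) : Prop :=
  ∀ i j k l : Fin n, G.Adj i j → i < j → i ≤ k → k < l → l ≤ j → G.Adj k l

/-- The bipartite graph `in_lex(G)` on `{x_1,…,x_n} ∪ {y_1,…,y_n}` (here `Sum.inl i = x_i`,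
`Sum.inr j = y_j`) whose edges are the pairs `{x_i, y_j}` with `i < j` and `{i,j} ∈ E(G)`. -/
def inLex {n : ℕ} (G : SimpleGraph (Fin n)) : SimpleGraph (Fin n ⊕ Fin n) :=
  SimpleGraph.fromRel (fun u v =>
    ∃ i j : Fin n, i < j ∧ G.Adj i j ∧ u = Sum.inl i ∧ v = Sum.inr j)

/-- `M` is an induced matching of `H`: a set of edges of `H`, pairwise vertex-disjoint,
such that no edge of `H` joins two vertices lying in distinct edges of `M`. -/
def IsInducedMatching {V : Type*} (H : SimpleGraph V) (M : Set (Sym2 V)) : Prop :=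
  M ⊆ H.edgeSet ∧
  (∀ e ∈ M, ∀ f ∈ M, e ≠ f → ∀ v, v ∈ e → v ∉ f) ∧
  (∀ e ∈ M, ∀ f ∈ M, e ≠ f → ∀ u ∈ e, ∀ v ∈ f, ¬ H.Adj u v)

/-- An indexed family of `m` pairwise distinct edges forming an induced matching of `H`. -/
def IsInducedMatchingFamily {V : Type*} (H : SimpleGraph V) {m : ℕ} (f : Fin m → Sym2 V) : Prop :=
  Function.Injective f ∧ IsInducedMatching H (Set.range f)

/-- `p` is an induced path of length `l` in `G`: `l+1` distinct vertices such that the edges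
of `G` among them are exactly the consecutive pairs. -/
def IsInducedPath {V : Type*} (G : SimpleGraph V) (l : ℕ) (p : Fin (l + 1) → V) : Prop :=
  Function.Injective p ∧
  ∀ a b : Fin (l + 1), G.Adj (p a) (p b) ↔ ((a : ℕ) + 1 = b ∨ (b : ℕ) + 1 = a)

/-- `c` is an induced cycle of length `k` in `H`: `k` distinct vertices such that the edges
of `H` among them are exactly the consecutive pairs (cyclically). -/
def IsInducedCycle {V : Type*} (H : SimpleGraph V) (k : ℕ) (c : Fin k → V) : Prop :=
  3 ≤ k ∧ Function.Injective c ∧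
  ∀ a b : Fin k, H.Adj (c a) (c b) ↔ (((a : ℕ) + 1) % k = b ∨ ((b : ℕ) + 1) % k = a)

/-- Condition (∗) for an induced matching `{x_{i t}, y_{j t}}` of `in_lex(G)`: for every
index `a` and vertex `t < i a` with `{t, j a} ∈ E(G)`, replacing `x_{i a}` by `x_t`
does not yield an induced matching of `in_lex(G)`. -/
def CondStar {n m : ℕ} (G : SimpleGraph (Fin n)) (i j : Fin m → Fin n) : Prop :=
  ∀ a : Fin m, ∀ t : Fin n, t < i a → G.Adj t (j a) →
    ¬ IsInducedMatchingFamily (inLex G)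
        (fun u => if u = a then s(Sum.inl t, Sum.inr (j u))
                  else s(Sum.inl (i u), Sum.inr (j u)))

set_option linter.unusedVariables false in
set_option linter.unreachableTactic false in
set_option linter.unusedTactic false in
section
namespace MyAux
variable {n : ℕ} {G : SimpleGraph (Fin n)}

lemma inLex_adj_inl_inr {a b : Fin n} :
    (inLex G).Adj (Sum.inl a) (Sum.inr b) ↔ a < b ∧ G.Adj a b := by
  unfold inLex
  rw [fromRel_adj]
  constructor
  · rintro ⟨-, h | h⟩ <;> obtain ⟨i, j, hij, hadj, h1, h2⟩ := h <;> simp_all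
  · rintro ⟨hlt, hadj⟩
    exact ⟨by simp, Or.inl ⟨a, b, hlt, hadj, rfl, rfl⟩⟩

lemma inLex_not_adj_inl_inl {a b : Fin n} : ¬ (inLex G).Adj (Sum.inl a) (Sum.inl b) := by
  unfold inLex
  rw [fromRel_adj]
  rintro ⟨-, h | h⟩ <;> obtain ⟨i, j, hij, hadj, h1, h2⟩ := h <;> simp_all

lemma inLex_not_adj_inr_inr {a b : Fin n} : ¬ (inLex G).Adj (Sum.inr a) (Sum.inr b) := by
  unfold inLex
  rw [fromRel_adj]
  rintro ⟨-, h | h⟩ <;> obtain ⟨i, j, hij, hadj, h1, h2⟩ := h <;> simp_all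

lemma inLex_adj_inr_inl {a b : Fin n} :
    (inLex G).Adj (Sum.inr a) (Sum.inl b) ↔ b < a ∧ G.Adj b a := by
  rw [adj_comm]; exact inLex_adj_inl_inr

lemma edge_form {e : Sym2 (Fin n ⊕ Fin n)} (he : e ∈ (inLex G).edgeSet) :
    ∃ a b : Fin n, a < b ∧ G.Adj a b ∧ e = s(Sum.inl a, Sum.inr b) := by
  induction e with
  | _ u v =>
    rw [SimpleGraph.mem_edgeSet] at he
    match u, v with
    | Sum.inl a, Sum.inl b => exact absurd he inLex_not_adj_inl_inl
    | Sum.inr a, Sum.inr b => exact absurd he inLex_not_adj_inr_inr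
    | Sum.inl a, Sum.inr b =>
      rw [inLex_adj_inl_inr] at he
      exact ⟨a, b, he.1, he.2, rfl⟩
    | Sum.inr a, Sum.inl b =>
      rw [inLex_adj_inr_inl] at he
      exact ⟨b, a, he.1, he.2, Sym2.eq_swap⟩

lemma pair_eq {a b c d : Fin n} :
    s(Sum.inl a, Sum.inr b) = s((Sum.inl c : Fin n ⊕ Fin n), Sum.inr d) ↔ a = c ∧ b = d := by
  rw [Sym2.eq_iff]
  constructor
  · rintro (⟨h1, h2⟩ | ⟨h1, h2⟩) <;> simp_all
  · rintro ⟨rfl, rfl⟩; exact Or.inl ⟨rfl, rfl⟩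

lemma adj_left (hG : HasIntervalProperty G) {a b c : Fin n} (h : G.Adj a b) (hab : a < b)
    (hac : a ≤ c) (hcb : c < b) : G.Adj c b :=
  hG a b c b h hab hac hcb le_rfl

lemma adj_right (hG : HasIntervalProperty G) {a b c : Fin n} (h : G.Adj a b) (hab : a < b)
    (hac : a < c) (hcb : c ≤ b) : G.Adj a c :=
  hG a b a c h hab le_rfl hac hcb

lemma exists_cross (v : ℕ) {a b : Fin n} (w : G.Walk a b) (ha : a.val ≤ v) (hb : v < b.val) :
    ∃ x y : Fin n, G.Adj x y ∧ x.val ≤ v ∧ v < y.val := by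
  induction w with
  | nil => omega
  | cons h p ih =>
    rename_i c d _
    by_cases hc : d.val ≤ v
    · exact ih hc hb
    · exact ⟨c, d, h, ha, by omega⟩

lemma consec_adj (hconn : G.Connected) (hG : HasIntervalProperty G)
    (v : Fin n) (hv : v.val + 1 < n) : G.Adj v ⟨v.val + 1, hv⟩ := by
  obtain ⟨w⟩ := hconn.preconnected v ⟨v.val + 1, hv⟩
  obtain ⟨x, y, hxy, hx, hy⟩ := exists_cross v.val w le_rfl (by simp)
  have hxylt : x < y := by rw [Fin.lt_def]; omega
  exact hG x y v ⟨v.val + 1, hv⟩ hxy hxylt (by rw [Fin.le_def]; omega)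
    (by rw [Fin.lt_def]; simp) (by rw [Fin.le_def]; simpa using hy)

section Part1
variable {l : ℕ} {p : Fin (l + 1) → Fin n}

lemma step_up (hG : HasIntervalProperty G) (hp : IsInducedPath G l p)
    {t : ℕ} (h2 : t + 2 ≤ l)
    (h01 : p ⟨t, by omega⟩ < p ⟨t + 1, by omega⟩) :
    p ⟨t + 1, by omega⟩ < p ⟨t + 2, by omega⟩ := by
  set a : Fin (l+1) := ⟨t, by omega⟩
  set b : Fin (l+1) := ⟨t + 1, by omega⟩
  set c : Fin (l+1) := ⟨t + 2, by omega⟩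
  have adj01 : G.Adj (p a) (p b) := (hp.2 a b).mpr (Or.inl rfl)
  have adj12 : G.Adj (p b) (p c) := (hp.2 b c).mpr (Or.inl rfl)
  have nadj02 : ¬ G.Adj (p a) (p c) := by
    rw [hp.2 a c]; simp [a, c]; omega
  by_contra hcon
  have hne : p b ≠ p c := fun h => by
    have := hp.1 h; simp [b, c, Fin.ext_iff] at this
  have hcb : p c < p b := lt_of_le_of_ne (not_lt.mp hcon) (Ne.symm hne)
  rcases lt_trichotomy (p c) (p a) with hca | hca | hca
  · exact nadj02 ((adj_right hG adj12.symm hcb hca h01.le).symm)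
  · have := hp.1 hca.symm; simp [a, c, Fin.ext_iff] at this
  · exact nadj02 (adj_right hG adj01 h01 hca hcb.le)

lemma step_down (hG : HasIntervalProperty G) (hp : IsInducedPath G l p)
    {t : ℕ} (h2 : t + 2 ≤ l)
    (h01 : p ⟨t + 1, by omega⟩ < p ⟨t, by omega⟩) :
    p ⟨t + 2, by omega⟩ < p ⟨t + 1, by omega⟩ := by
  set a : Fin (l+1) := ⟨t, by omega⟩
  set b : Fin (l+1) := ⟨t + 1, by omega⟩
  set c : Fin (l+1) := ⟨t + 2, by omega⟩
  have adj01 : G.Adj (p a) (p b) := (hp.2 a b).mpr (Or.inl rfl)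
  have adj12 : G.Adj (p b) (p c) := (hp.2 b c).mpr (Or.inl rfl)
  have nadj02 : ¬ G.Adj (p a) (p c) := by
    rw [hp.2 a c]; simp [a, c]; omega
  by_contra hcon
  have hne : p b ≠ p c := fun h => by
    have := hp.1 h; simp [b, c, Fin.ext_iff] at this
  have hbc : p b < p c := lt_of_le_of_ne (not_lt.mp hcon) hne
  rcases lt_trichotomy (p a) (p c) with hac | hac | hac
  · exact nadj02 (adj_left hG adj12 hbc h01.le hac)
  · have := hp.1 hac; simp [a, c, Fin.ext_iff] at this
  · exact nadj02 ((adj_left hG adj01.symm h01 hbc.le hac).symm)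

lemma strictMono_of_01 (hG : HasIntervalProperty G) (hp : IsInducedPath G l p)
    (hl : 1 ≤ l) (h01 : p ⟨0, by omega⟩ < p ⟨1, by omega⟩) : StrictMono p := by
  have key : ∀ t : ℕ, ∀ h : t + 1 ≤ l, p ⟨t, by omega⟩ < p ⟨t + 1, by omega⟩ := by
    intro t
    induction t with
    | zero => intro _; exact h01
    | succ s ih => intro h; exact step_up hG hp (by omega) (ih (by omega))
  rw [Fin.strictMono_iff_lt_succ]
  intro i
  have := key i.val (by omega)
  convert this using 2
  · rfl
  · simp [Fin.ext_iff]
  · simp [Fin.ext_iff]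

lemma strictAnti_of_01 (hG : HasIntervalProperty G) (hp : IsInducedPath G l p)
    (hl : 1 ≤ l) (h01 : p ⟨1, by omega⟩ < p ⟨0, by omega⟩) : StrictAnti p := by
  have key : ∀ t : ℕ, ∀ h : t + 1 ≤ l, p ⟨t + 1, by omega⟩ < p ⟨t, by omega⟩ := by
    intro t
    induction t with
    | zero => intro _; exact h01
    | succ s ih => intro h; exact step_down hG hp (by omega) (ih (by omega))
  rw [Fin.strictAnti_iff_succ_lt]
  intro i
  have := key i.val (by omega)
  convert this using 2
  · rfl
  · simp [Fin.ext_iff]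
  · simp [Fin.ext_iff]

lemma rev_inducedPath (hp : IsInducedPath G l p) :
    IsInducedPath G l (p ∘ Fin.rev) := by
  refine ⟨hp.1.comp (Fin.rev_injective), fun a b => ?_⟩
  simp only [Function.comp_apply]
  rw [hp.2 (Fin.rev a) (Fin.rev b)]
  have ha := a.isLt
  have hb := b.isLt
  simp only [Fin.val_rev]
  omega

lemma matching_of_mono_path (hG : HasIntervalProperty G) {q : Fin (l + 1) → Fin n}
    (hq : IsInducedPath G l q) (hmono : StrictMono q) :
    ∃ M : Set (Sym2 (Fin n ⊕ Fin n)), IsInducedMatching (inLex G) M ∧ M.ncard = l := by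
  set f : Fin l → Sym2 (Fin n ⊕ Fin n) :=
    fun t => s(Sum.inl (q t.castSucc), Sum.inr (q t.succ)) with hf
  have hinj : Function.Injective f := by
    intro s t h
    rw [pair_eq] at h
    exact Fin.castSucc_injective _ (hq.1 h.1)
  have hadj : ∀ t : Fin l, G.Adj (q t.castSucc) (q t.succ) := fun t =>
    (hq.2 _ _).mpr (Or.inl (by simp))
  refine ⟨Set.range f, ⟨?_, ?_, ?_⟩, ?_⟩
  · rintro e ⟨t, rfl⟩
    rw [SimpleGraph.mem_edgeSet]
    rw [inLex_adj_inl_inr]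
    exact ⟨hmono (Fin.castSucc_lt_succ : t.castSucc < t.succ), hadj t⟩
  · rintro e ⟨s, rfl⟩ e' ⟨t, rfl⟩ hne v hv hv'
    have hst : s ≠ t := fun h => hne (by rw [h])
    rw [hf, Sym2.mem_iff] at hv hv'
    rcases hv with rfl | rfl <;> rcases hv' with h | h
    · exact hst (Fin.castSucc_injective _ (hq.1 (Sum.inl.inj h)))
    · cases h
    · cases h
    · exact hst (Fin.succ_injective _ (hq.1 (Sum.inr.inj h)))
  · rintro e ⟨s, rfl⟩ e' ⟨t, rfl⟩ hne u hu v hv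
    have hst : s ≠ t := fun h => hne (by rw [h])
    have hstv : (s : ℕ) ≠ (t : ℕ) := fun h => hst (Fin.ext h)
    rw [hf, Sym2.mem_iff] at hu hv
    rcases hu with rfl | rfl <;> rcases hv with rfl | rfl
    · exact inLex_not_adj_inl_inl
    · rw [inLex_adj_inl_inr]
      rintro ⟨hlt, hadj'⟩
      rcases (hq.2 _ _).mp hadj' with h | h
      · simp at h; omega
      · simp at h
        have : t.succ < s.castSucc := by
          rw [Fin.lt_def]; simp; omega
        exact absurd (hmono this) (by omega)
    · rw [inLex_adj_inr_inl]
      rintro ⟨hlt, hadj'⟩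
      rcases (hq.2 _ _).mp hadj' with h | h
      · simp at h; omega
      · simp at h
        have : s.succ < t.castSucc := by
          rw [Fin.lt_def]; simp; omega
        exact absurd (hmono this) (by omega)
    · exact inLex_not_adj_inr_inr
  · rw [← Nat.card_coe_set_eq, Nat.card_range_of_injective hinj, Nat.card_eq_fintype_card,
      Fintype.card_fin]

lemma part1 (hG : HasIntervalProperty G) {l : ℕ} (p : Fin (l + 1) → Fin n)
    (hp : IsInducedPath G l p) :
    ∃ M : Set (Sym2 (Fin n ⊕ Fin n)), IsInducedMatching (inLex G) M ∧ M.ncard = l := by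
  rcases Nat.eq_zero_or_pos l with rfl | hl
  · refine ⟨∅, ⟨Set.empty_subset _, ?_, ?_⟩, by simp⟩ <;> simp
  · have hne : p ⟨0, by omega⟩ ≠ p ⟨1, by omega⟩ := fun h => by
      have := hp.1 h; simp [Fin.ext_iff] at this
    rcases lt_or_gt_of_ne hne with h01 | h01
    · exact matching_of_mono_path hG hp (strictMono_of_01 hG hp hl h01)
    · have hrev := rev_inducedPath hp
      have : StrictMono (p ∘ Fin.rev) :=
        (strictAnti_of_01 hG hp hl h01).comp (fun a b h => Fin.rev_lt_rev.mpr h)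
      exact matching_of_mono_path hG hrev this

end Part1

section Part2
variable {m : ℕ}

/-- abbreviation for the family of edges -/
def fam (i j : Fin m → Fin n) : Fin m → Sym2 (Fin n ⊕ Fin n) :=
  fun t => s(Sum.inl (i t), Sum.inr (j t))

def FamP (G : SimpleGraph (Fin n)) (i j : Fin m → Fin n) : Prop :=
  IsInducedMatchingFamily (inLex G) (fam i j)

lemma famP_of {i j : Fin m → Fin n}
    (hedge : ∀ t, i t < j t ∧ G.Adj (i t) (j t))
    (hiinj : Function.Injective i) (hjinj : Function.Injective j)
    (hnon : ∀ a b, a ≠ b → ¬ (i a < j b ∧ G.Adj (i a) (j b))) : FamP G i j := by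
  have hfinj : Function.Injective (fam i j) := by
    intro a b h
    simp only [fam] at h
    rw [pair_eq] at h
    exact hjinj h.2
  refine ⟨hfinj, ?_, ?_, ?_⟩
  · rintro e ⟨t, rfl⟩
    simp only [fam]
    rw [SimpleGraph.mem_edgeSet, inLex_adj_inl_inr]
    exact hedge t
  · rintro e ⟨a, rfl⟩ e' ⟨b, rfl⟩ hne v hv hv'
    have hab : a ≠ b := fun h => hne (by rw [h])
    simp only [fam, Sym2.mem_iff] at hv hv'
    rcases hv with rfl | rfl <;> rcases hv' with h | h
    · exact hab (hiinj (Sum.inl.inj h))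
    · cases h
    · cases h
    · exact hab (hjinj (Sum.inr.inj h))
  · rintro e ⟨a, rfl⟩ e' ⟨b, rfl⟩ hne u hu v hv
    have hab : a ≠ b := fun h => hne (by rw [h])
    simp only [fam, Sym2.mem_iff] at hu hv
    rcases hu with rfl | rfl <;> rcases hv with rfl | rfl
    · exact inLex_not_adj_inl_inl
    · rw [inLex_adj_inl_inr]; exact hnon a b hab
    · rw [inLex_adj_inr_inl]; exact hnon b a (Ne.symm hab)
    · exact inLex_not_adj_inr_inr

lemma famP_edge {i j : Fin m → Fin n} (h : FamP G i j) (t : Fin m) :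
    i t < j t ∧ G.Adj (i t) (j t) := by
  have := h.2.1 ⟨t, rfl⟩
  simp only [fam] at this
  rw [SimpleGraph.mem_edgeSet, inLex_adj_inl_inr] at this
  exact this

lemma famP_iinj {i j : Fin m → Fin n} (h : FamP G i j) : Function.Injective i := by
  intro a b hab
  by_contra hne
  have hfne : fam i j a ≠ fam i j b := fun he => hne (h.1 he)
  exact h.2.2.1 _ ⟨a, rfl⟩ _ ⟨b, rfl⟩ hfne (Sum.inl (i a))
    (by simp [fam])
    (by rw [hab]; simp [fam])

lemma famP_jinj {i j : Fin m → Fin n} (h : FamP G i j) : Function.Injective j := by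
  intro a b hab
  by_contra hne
  have hfne : fam i j a ≠ fam i j b := fun he => hne (h.1 he)
  exact h.2.2.1 _ ⟨a, rfl⟩ _ ⟨b, rfl⟩ hfne (Sum.inr (j a))
    (by simp [fam])
    (by rw [hab]; simp [fam])

lemma famP_non {i j : Fin m → Fin n} (h : FamP G i j) {a b : Fin m} (hab : a ≠ b) :
    ¬ (i a < j b ∧ G.Adj (i a) (j b)) := by
  have hfne : fam i j a ≠ fam i j b := fun he => hab (h.1 he)
  have := h.2.2.2 _ ⟨a, rfl⟩ _ ⟨b, rfl⟩ hfne (Sum.inl (i a))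
    (by simp [fam]) (Sum.inr (j b))
    (by simp [fam])
  rwa [inLex_adj_inl_inr] at this

lemma exists_famP (M : Set (Sym2 (Fin n ⊕ Fin n))) (hM : IsInducedMatching (inLex G) M)
    (hcard : M.ncard = m) : ∃ i j : Fin m → Fin n, FamP G i j := by
  have hfin : Finite ↥M := Set.Finite.to_subtype (Set.toFinite M)
  have hcard' : Nat.card ↥M = m := by rw [Nat.card_coe_set_eq]; exact hcard
  set E := (Finite.equivFinOfCardEq hcard').symm with hE
  have hform : ∀ t : Fin m, ∃ a b : Fin n, (E t : Sym2 (Fin n ⊕ Fin n)) = s(Sum.inl a, Sum.inr b) := by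
    intro t
    obtain ⟨a, b, -, -, h⟩ := edge_form (hM.1 (E t).2)
    exact ⟨a, b, h⟩
  choose i j hij using hform
  have hfeq : fam i j = fun t => ((E t : Sym2 (Fin n ⊕ Fin n))) := by
    funext t; simp only [fam]; rw [hij t]
  have hrange : Set.range (fun t => ((E t : Sym2 (Fin n ⊕ Fin n)))) = M := by
    ext x
    constructor
    · rintro ⟨t, rfl⟩; exact (E t).2
    · intro hx; exact ⟨E.symm ⟨x, hx⟩, by simp⟩
  refine ⟨i, j, ?_, ?_⟩
  · rw [hfeq]
    exact Subtype.val_injective.comp E.injective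
  · rw [hfeq, hrange]
    exact hM


lemma part2 (hconn : G.Connected) (hG : HasIntervalProperty G) (hmpos : 0 < m)
    (hm : IsGreatest {k : ℕ | ∃ M : Set (Sym2 (Fin n ⊕ Fin n)),
            IsInducedMatching (inLex G) M ∧ M.ncard = k} m) :
    ∃ p : Fin (m + 1) → Fin n, IsInducedPath G m p := by
  obtain ⟨M, hM, hcard⟩ := hm.1
  obtain ⟨i₀, j₀, hfam₀⟩ := exists_famP M hM hcard
  set S : Set ℕ := {k | ∃ i j : Fin m → Fin n, FamP G i j ∧ k = ∑ t, (i t).val} with hSdef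
  have hSne : S.Nonempty := ⟨_, i₀, j₀, hfam₀, rfl⟩
  obtain ⟨i₁, j₁, hfam₁, hsum₁⟩ := Nat.sInf_mem hSne
  have hmin : ∀ i' j' : Fin m → Fin n, FamP G i' j' → sInf S ≤ ∑ t, (i' t).val :=
    fun i' j' h => Nat.sInf_le ⟨i', j', h, rfl⟩
  set σ := Tuple.sort i₁ with hσ
  set i : Fin m → Fin n := i₁ ∘ σ with hidef
  set j : Fin m → Fin n := j₁ ∘ σ with hjdef
  have hfam : FamP G i j :=
    famP_of (fun t => famP_edge hfam₁ (σ t)) ((famP_iinj hfam₁).comp σ.injective)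
      ((famP_jinj hfam₁).comp σ.injective)
      (fun a b hab => famP_non hfam₁ (fun h => hab (σ.injective h)))
  have hsum : ∑ t, (i t).val = sInf S := by
    rw [hsum₁]
    exact Equiv.sum_comp σ (fun t => (i₁ t).val)
  have hedge : ∀ t, i t < j t ∧ G.Adj (i t) (j t) := famP_edge hfam
  have hiinj := famP_iinj hfam
  have hnon : ∀ a b : Fin m, a ≠ b → ¬ (i a < j b ∧ G.Adj (i a) (j b)) :=
    fun a b h => famP_non hfam h
  have himono : StrictMono i := (Tuple.monotone_sort i₁).strictMono_of_injective hiinj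
  have h2 : ∀ a b : Fin m, a < b → j a ≤ i b := by
    intro a b hab
    by_contra hlt
    push_neg at hlt
    exact hnon b a hab.ne' ⟨hlt, adj_left hG (hedge a).2 (hedge a).1 (himono hab).le hlt⟩
  have hjmono : ∀ a b : Fin m, a < b → j a < j b := fun a b hab =>
    lt_of_le_of_lt (h2 a b hab) (hedge b).1
  have hjmono' : ∀ a b : Fin m, a ≤ b → j a ≤ j b := by
    intro a b hab
    rcases eq_or_lt_of_le hab with rfl | h
    · exact le_rfl
    · exact (hjmono a b h).le
  have h3 : ∀ a b : Fin m, a < b → ¬ G.Adj (i a) (j b) := fun a b hab hadj =>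
    hnon a b hab.ne ⟨lt_trans (himono hab) (hedge b).1, hadj⟩
  have hrep : ∀ (b : Fin m) (u : Fin n), u < i b → G.Adj u (j b) →
      ∃ c, c ≠ b ∧ (u = i c ∨ (u < j c ∧ G.Adj u (j c))) := by
    intro b u hu hadj
    by_contra hno
    push_neg at hno
    set i' : Fin m → Fin n := Function.update i b u with hi'
    have hi'b : i' b = u := Function.update_self b u i
    have hi'ne : ∀ c, c ≠ b → i' c = i c := fun c h => Function.update_of_ne h u i
    have hfam' : FamP G i' j := by
      apply famP_of
      · intro t
        by_cases ht : t = b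
        · subst ht; rw [hi'b]; exact ⟨lt_trans hu (hedge t).1, hadj⟩
        · rw [hi'ne t ht]; exact hedge t
      · intro a b' hab
        by_cases ha : a = b <;> by_cases hb' : b' = b
        · rw [ha, hb']
        · subst ha; rw [hi'b, hi'ne b' hb'] at hab
          exact absurd hab (hno b' hb').1
        · subst hb'; rw [hi'b, hi'ne a ha] at hab
          exact absurd hab.symm (hno a ha).1
        · rw [hi'ne a ha, hi'ne b' hb'] at hab; exact hiinj hab
      · exact famP_jinj hfam
      · intro a b' hab
        by_cases ha : a = b
        · subst ha; rw [hi'b]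
          exact fun hc => (hno b' (Ne.symm hab)).2 hc.1 hc.2
        · rw [hi'ne a ha]; exact hnon a b' hab
    have hcomp : (fun t => ((i' t).val : ℕ)) = Function.update (fun t => (i t).val) b u.val := by
      funext t
      by_cases ht : t = b
      · subst ht; rw [hi'b, Function.update_self]
      · rw [hi'ne t ht, Function.update_of_ne ht]
    have e1 : ∑ t, (i' t).val = u.val + ∑ t ∈ Finset.univ \ {b}, (i t).val := by
      calc ∑ t, (i' t).val = ∑ t, Function.update (fun t => (i t).val) b u.val t := by rw [← hcomp]
        _ = u.val + ∑ t ∈ Finset.univ \ {b}, (i t).val :=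
            Finset.sum_update_of_mem (Finset.mem_univ b) _ _
    have e2 : ∑ t, (i t).val = (i b).val + ∑ t ∈ Finset.univ \ {b}, (i t).val := by
      calc ∑ t, (i t).val = ∑ t, Function.update (fun t => (i t).val) b (i b).val t := by
            congr 1; funext t
            by_cases ht : t = b
            · subst ht; rw [Function.update_self]
            · rw [Function.update_of_ne ht]
        _ = (i b).val + ∑ t ∈ Finset.univ \ {b}, (i t).val :=
            Finset.sum_update_of_mem (Finset.mem_univ b) _ _
    have huv : u.val < (i b).val := hu
    have := hmin i' j hfam'
    omega
  have claimA : ∀ a b : Fin m, (a : ℕ) + 1 = (b : ℕ) → G.Adj (i a) (i b) := by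
    intro a b hab1
    have hab : a < b := by rw [Fin.lt_def]; omega
    by_contra hA
    have hiab : i a < i b := himono hab
    have hjb : j a < i b := by
      by_contra hle
      push_neg at hle
      exact hA (adj_right hG (hedge a).2 (hedge a).1 hiab hle)
    by_cases hcase : ∃ u : Fin n, u < i b ∧ G.Adj u (j b)
    · have key : ∀ u : Fin n, u < i b → G.Adj u (j b) → u < j a := by
        intro u h1 h4
        obtain ⟨c, hcb, hc⟩ := hrep b u h1 h4
        rcases lt_or_gt_of_ne hcb with hcb' | hcb'
        · have hca : c ≤ a := by
            rw [Fin.le_def]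
            rw [Fin.lt_def] at hcb'
            omega
          rcases hc with rfl | ⟨h5, h6⟩
          · exact lt_of_le_of_lt (himono.monotone hca) (hedge a).1
          · exact lt_of_lt_of_le h5 (hjmono' c a hca)
        · exfalso
          rcases hc with rfl | ⟨h5, h6⟩
          · exact absurd (himono hcb') (not_lt.mpr h1.le)
          · exact hnon b c hcb'.ne ⟨lt_trans (himono hcb') (hedge c).1,
              adj_left hG h6 h5 h1.le (lt_trans (himono hcb') (hedge c).1)⟩
      obtain ⟨u₀, hu1, hu2⟩ := hcase
      have hu3 : u₀ < j a := key u₀ hu1 hu2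
      have hjj : G.Adj (j a) (j b) := adj_left hG hu2 (lt_trans hu1 (hedge b).1) hu3.le
        (lt_trans hjb (hedge b).1)
      exact absurd (key (j a) hjb hjj) (lt_irrefl _)
    · push_neg at hcase
      have hib1 : 1 ≤ (i b).val := by
        have h1 := (hedge a).1
        rw [Fin.lt_def] at h1 hjb
        omega
      set w : Fin n := ⟨(i b).val - 1, by have := (i b).isLt; omega⟩ with hwdef
      have hw1 : w.val + 1 = (i b).val := by
        have hwv : w.val = (i b).val - 1 := rfl
        omega
      have hwb : G.Adj w (i b) := by
        have h := consec_adj hconn hG w (by rw [hw1]; exact (i b).isLt)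
        convert h using 1
        exact Fin.ext hw1.symm
      have hwlt : w < i b := by rw [Fin.lt_def]; omega
      have hwja : j a ≤ w := by
        rw [Fin.le_def, hwdef]
        rw [Fin.lt_def] at hjb
        simp
        omega
      have hbv : ∀ t : Fin m, t ≤ a ∨ b ≤ t := by
        intro t
        rw [Fin.le_def, Fin.le_def]
        omega
      have hwne : ∀ t : Fin m, i t ≠ w := by
        intro t
        rcases hbv t with h | h
        · exact ne_of_lt (lt_of_le_of_lt (himono.monotone h)
            (lt_of_lt_of_le (hedge a).1 hwja))
        · exact ne_of_gt (lt_of_lt_of_le hwlt (himono.monotone h))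
      have hibne : ∀ t : Fin m, i b ≠ j t := by
        intro t
        rcases hbv t with h | h
        · exact ne_of_gt (lt_of_le_of_lt (hjmono' t a h) hjb)
        · exact ne_of_lt (lt_of_lt_of_le (hedge b).1 (hjmono' b t h))
      have hnadj1 : ∀ t : Fin m, ¬ (w < j t ∧ G.Adj w (j t)) := by
        intro t hc
        rcases hbv t with h | h
        · exact absurd hc.1 (not_lt.mpr (le_trans (hjmono' t a h) hwja))
        · rcases eq_or_lt_of_le h with rfl | h'
          · exact hcase w hwlt hc.2
          · exact hnon b t h'.ne ⟨lt_trans (himono h') (hedge t).1,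
              adj_left hG hc.2 hc.1 hwlt.le (lt_trans (himono h') (hedge t).1)⟩
      have hnadj2 : ∀ t : Fin m, ¬ (i t < i b ∧ G.Adj (i t) (i b)) := by
        intro t hc
        rcases hbv t with h | h
        · rcases eq_or_lt_of_le h with rfl | h'
          · exact hA hc.2
          · exact hA (adj_left hG hc.2 hc.1 (himono.monotone h) hiab)
        · exact absurd hc.1 (not_lt.mpr (himono.monotone h))
      set e' : Sym2 (Fin n ⊕ Fin n) := s(Sum.inl w, Sum.inr (i b)) with he'
      have hnotmem : e' ∉ Set.range (fam i j) := by
        rintro ⟨t, ht⟩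
        simp only [fam, he'] at ht
        rw [pair_eq] at ht
        exact hwne t ht.1
      have hM' : IsInducedMatching (inLex G) (insert e' (Set.range (fam i j))) := by
        refine ⟨?_, ?_, ?_⟩
        · rintro e (rfl | he)
          · rw [he', SimpleGraph.mem_edgeSet, inLex_adj_inl_inr]
            exact ⟨hwlt, hwb⟩
          · exact hfam.2.1 he
        · rintro e (rfl | ⟨s, rfl⟩) f' (rfl | ⟨t, rfl⟩) hne v hv hv'
          · exact hne rfl
          · simp only [he', fam, Sym2.mem_iff] at hv hv'
            rcases hv with rfl | rfl <;> rcases hv' with h | h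
            · exact hwne t (Sum.inl.inj h).symm
            · cases h
            · cases h
            · exact hibne t (Sum.inr.inj h)
          · simp only [he', fam, Sym2.mem_iff] at hv hv'
            rcases hv with rfl | rfl <;> rcases hv' with h | h
            · exact hwne s (Sum.inl.inj h)
            · cases h
            · cases h
            · exact hibne s (Sum.inr.inj h).symm
          · exact hfam.2.2.1 _ ⟨s, rfl⟩ _ ⟨t, rfl⟩ hne v hv hv'
        · rintro e (rfl | ⟨s, rfl⟩) f' (rfl | ⟨t, rfl⟩) hne u hu v hv
          · exact absurd rfl hne
          · simp only [he', fam, Sym2.mem_iff] at hu hv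
            rcases hu with rfl | rfl <;> rcases hv with rfl | rfl
            · exact inLex_not_adj_inl_inl
            · rw [inLex_adj_inl_inr]; exact hnadj1 t
            · rw [inLex_adj_inr_inl]; exact hnadj2 t
            · exact inLex_not_adj_inr_inr
          · simp only [he', fam, Sym2.mem_iff] at hu hv
            rcases hu with rfl | rfl <;> rcases hv with rfl | rfl
            · exact inLex_not_adj_inl_inl
            · rw [inLex_adj_inl_inr]; exact hnadj2 s
            · rw [inLex_adj_inr_inl]; exact hnadj1 s
            · exact inLex_not_adj_inr_inr
          · exact hfam.2.2.2 _ ⟨s, rfl⟩ _ ⟨t, rfl⟩ hne u hu v hv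
      have hcard' : (insert e' (Set.range (fam i j))).ncard = m + 1 := by
        rw [Set.ncard_insert_of_notMem hnotmem (Set.toFinite _)]
        rw [← Nat.card_coe_set_eq, Nat.card_range_of_injective hfam.1,
          Nat.card_eq_fintype_card, Fintype.card_fin]
      have := hm.2 ⟨_, hM', hcard'⟩
      omega
  -- build the induced path
  have hm1 : m - 1 < m := by omega
  set last : Fin m := ⟨m - 1, hm1⟩ with hlast
  set p : Fin (m + 1) → Fin n := fun t => if h : t.val < m then i ⟨t.val, h⟩ else j last
    with hpdef
  have hp1 : ∀ (t : Fin (m + 1)) (h : t.val < m), p t = i ⟨t.val, h⟩ := fun t h => dif_pos h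
  have hp2 : ∀ t : Fin (m + 1), t.val = m → p t = j last := by
    intro t h
    simp only [hpdef]
    rw [dif_neg (by omega)]
  have hpmono : StrictMono p := by
    intro a b hab
    rw [Fin.lt_def] at hab
    by_cases hb : b.val < m
    · rw [hp1 a (by omega), hp1 b hb]
      exact himono (by rw [Fin.lt_def]; exact hab)
    · have hbm : b.val = m := by omega
      rw [hp1 a (by omega), hp2 b hbm]
      exact lt_of_le_of_lt
        (himono.monotone (by rw [Fin.le_def, hlast]; simp; omega)) (hedge last).1
  have hadjiff : ∀ a b : Fin (m + 1), a.val < b.val →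
      (G.Adj (p a) (p b) ↔ b.val = a.val + 1) := by
    intro a b hab
    by_cases hb : b.val < m
    · rw [hp1 a (by omega), hp1 b hb]
      constructor
      · intro hadj
        by_contra hne
        have ha1 : a.val + 1 < m := by omega
        refine h3 ⟨a.val, by omega⟩ ⟨a.val + 1, ha1⟩ (by rw [Fin.lt_def]; simp) ?_
        refine adj_right hG hadj (himono (by rw [Fin.lt_def]; simpa)) ?_ ?_
        · exact lt_trans
            (himono (show (⟨a.val, by omega⟩ : Fin m) < ⟨a.val + 1, ha1⟩ by
              rw [Fin.lt_def]; simp)) (hedge _).1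
        · exact h2 ⟨a.val + 1, ha1⟩ ⟨b.val, hb⟩ (by rw [Fin.lt_def]; simp; omega)
      · intro h
        exact claimA _ _ (by simp; omega)
    · have hbm : b.val = m := by omega
      rw [hp1 a (by omega), hp2 b hbm]
      constructor
      · intro hadj
        by_contra hne
        exact h3 ⟨a.val, by omega⟩ last (by rw [Fin.lt_def, hlast]; simp; omega) hadj
      · intro h
        have heq : (⟨a.val, by omega⟩ : Fin m) = last := by
          rw [hlast]
          exact Fin.ext (by simp; omega)
        rw [heq]
        exact (hedge last).2
  refine ⟨p, hpmono.injective, ?_⟩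
  intro a b
  rcases lt_trichotomy a.val b.val with h | h | h
  · rw [hadjiff a b h]; omega
  · have : a = b := Fin.ext h
    subst this
    exact iff_of_false (G.irrefl) (by omega)
  · rw [adj_comm, hadjiff b a h]; omega

end Part2
end MyAux
end

/-- Proposition 2.4: if `G` is connected with the interval property, `ℓ` is the length of
the longest induced path of `G` and `m = indmatch(in_lex(G))`, then `m = ℓ`. -/
theorem stmt_15 {n : ℕ} (G : SimpleGraph (Fin n)) (hconn : G.Connected)
    (hG : HasIntervalProperty G) (ℓ m : ℕ)
    (hℓ : IsGreatest {l : ℕ | ∃ p : Fin (l + 1) → Fin n, IsInducedPath G l p} ℓ)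
    (hm : IsGreatest {k : ℕ | ∃ M : Set (Sym2 (Fin n ⊕ Fin n)),
            IsInducedMatching (inLex G) M ∧ M.ncard = k} m) :
    m = ℓ := by
  apply le_antisymm
  · rcases Nat.eq_zero_or_pos m with rfl | hmpos
    · exact Nat.zero_le ℓ
    · obtain ⟨p, hp⟩ := MyAux.part2 hconn hG hmpos hm
      exact hℓ.2 ⟨p, hp⟩
  · obtain ⟨p, hp⟩ := hℓ.1
    obtain ⟨M, hM, hc⟩ := MyAux.part1 hG p hp
    exact hm.2 ⟨M, hM, hc⟩
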